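/- arXiv:1604.06611 — 8 statements merged into one kernel-verified Lean document; each statement's English description precedes it below -/
import Mathlib

section
/- If the bounded linear operator B : W → V*, (Bw)(v) = ℬ(w,v), associated with the bounded bilinear form ℬ is a bijection onto V* with continuous inverse, then ℬ satisfies condition (BNB1) with constant c_B ≥ ‖B⁻¹‖⁻¹ > 0 and condition (BNB2). -/
/-- **Banach–Nečas–Babuška, necessity direction.**
If the bounded linear operator `B : W → V*` associated with the bounded bilinear form
`ℬ : W × V → ℝ` is a bijection onto `V*` with continuous inverse `B⁻¹`, then `ℬ` satisfies
condition (BNB1) with constant `c_B = ‖B⁻¹‖⁻¹ > 0` and condition (BNB2). -/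
theorem bnb_necessity
    {W V : Type*} [NormedAddCommGroup W] [InnerProductSpace ℝ W] [CompleteSpace W]
    [NormedAddCommGroup V] [InnerProductSpace ℝ V] [CompleteSpace V] [Nontrivial W]
    (B : W →L[ℝ] V →L[ℝ] ℝ) (Binv : (V →L[ℝ] ℝ) →L[ℝ] W)
    (hleft : ∀ w : W, Binv (B w) = w)
    (hright : ∀ F : V →L[ℝ] ℝ, B (Binv F) = F) :
    0 < ‖Binv‖⁻¹ ∧
    (∀ w : W, ‖Binv‖⁻¹ * ‖w‖ ≤ ⨆ v : {v : V // v ≠ 0}, B w v / ‖(v : V)‖) ∧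
    (∀ v : V, v ≠ 0 → ∃ w : W, 0 < B w v) := by
  obtain ⟨w0, hw0⟩ := exists_ne (0 : W)
  have hVnt : Nontrivial V := by
    by_contra h
    rw [not_nontrivial_iff_subsingleton] at h
    have h0 : B w0 = 0 := by
      ext v
      have : v = (0 : V) := Subsingleton.elim _ _
      simp [this]
    exact hw0 (by rw [← hleft w0, h0, map_zero])
  have hBinv : Binv ≠ 0 := by
    intro h
    exact hw0 (by rw [← hleft w0, h]; simp)
  have hpos : (0 : ℝ) < ‖Binv‖ :=
    lt_of_le_of_ne (ContinuousLinearMap.opNorm_nonneg _) fun h => hBinv (Binv.opNorm_zero_iff.mp h.symm)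
  have hip : (0 : ℝ) < ‖Binv‖⁻¹ := inv_pos.mpr hpos
  refine ⟨hip, ?_, ?_⟩
  · intro w
    haveI : Nonempty {v : V // v ≠ 0} := by
      obtain ⟨v0, hv0⟩ := exists_ne (0 : V)
      exact ⟨⟨v0, hv0⟩⟩
    have hbdd : BddAbove (Set.range fun v : {v : V // v ≠ 0} => B w v / ‖(v : V)‖) := by
      refine ⟨‖B w‖, ?_⟩
      rintro x ⟨v, rfl⟩
      have hv : (0 : ℝ) < ‖(v : V)‖ := norm_pos_iff.mpr v.2
      rw [div_le_iff₀ hv]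
      calc B w v ≤ |B w v| := le_abs_self _
        _ = ‖B w v‖ := (Real.norm_eq_abs _).symm
        _ ≤ ‖B w‖ * ‖(v : V)‖ := (B w).le_opNorm _
    set S : ℝ := ⨆ v : {v : V // v ≠ 0}, B w v / ‖(v : V)‖ with hS
    have hSnn : 0 ≤ S := by
      obtain ⟨v0, hv0⟩ := exists_ne (0 : V)
      have h1 : B w v0 / ‖v0‖ ≤ S := le_ciSup hbdd ⟨v0, hv0⟩
      have h2 : B w (-v0) / ‖(-v0 : V)‖ ≤ S := le_ciSup hbdd ⟨-v0, neg_ne_zero.mpr hv0⟩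
      rw [map_neg, norm_neg, neg_div] at h2
      linarith
    have hnorm : ‖B w‖ ≤ S := by
      apply (B w).opNorm_le_bound hSnn
      intro v
      rcases eq_or_ne v 0 with rfl | hv
      · simp
      · have hvn : (0 : ℝ) < ‖v‖ := norm_pos_iff.mpr hv
        have h1 : B w v / ‖v‖ ≤ S := le_ciSup hbdd ⟨v, hv⟩
        have h2 : B w (-v) / ‖(-v : V)‖ ≤ S := le_ciSup hbdd ⟨-v, neg_ne_zero.mpr hv⟩
        rw [map_neg, norm_neg, neg_div] at h2
        have habs : |B w v| / ‖v‖ ≤ S := by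
          rcases abs_cases (B w v) with ⟨h, _⟩ | ⟨h, _⟩
          · rw [h]; exact h1
          · rw [h, neg_div]; exact h2
        rw [Real.norm_eq_abs, ← div_le_iff₀ hvn]
        exact habs
    have hw : ‖w‖ ≤ ‖Binv‖ * ‖B w‖ := by
      calc ‖w‖ = ‖Binv (B w)‖ := by rw [hleft]
        _ ≤ ‖Binv‖ * ‖B w‖ := Binv.le_opNorm _
    calc ‖Binv‖⁻¹ * ‖w‖ ≤ ‖Binv‖⁻¹ * (‖Binv‖ * ‖B w‖) := by
          exact mul_le_mul_of_nonneg_left hw (le_of_lt hip)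
      _ = ‖B w‖ := by field_simp
      _ ≤ S := hnorm
  · intro v hv
    refine ⟨Binv (InnerProductSpace.toDual ℝ V v), ?_⟩
    rw [hright]
    rw [InnerProductSpace.toDual_apply_apply]
    rw [real_inner_self_eq_norm_sq]
    exact pow_pos (norm_pos_iff.mpr hv) 2
end

section
/- Assume W and V are nontrivial and the bounded bilinear form ℬ satisfies condition (BNB1) with some constant c_B > 0 and condition (BNB2). Then the two inf-sup constants coincide: inf_{0≠w∈W} sup_{0≠v∈V} ℬ(w,v)/(‖w‖_W‖v‖_V) = inf_{0≠v∈V} sup_{0≠w∈W} ℬ(w,v)/(‖w‖_W‖v‖_V), i.e. the spaces over which the infimum and supremum are taken may be interchanged. -/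
open RealInnerProductSpace ContinuousLinearMap

/-- The sup of `⟪x,v⟫/(a‖v‖)` over nonzero `v` equals `‖x‖/a`. -/
lemma iSup_inner_div_aux {E : Type*} [NormedAddCommGroup E] [InnerProductSpace ℝ E]
    [Nontrivial E] (x : E) (hx : x ≠ 0) (a : ℝ) (ha : 0 < a) :
    (⨆ v : {v : E // v ≠ 0}, ⟪x, (v : E)⟫ / (a * ‖(v : E)‖)) = ‖x‖ / a := by
  haveI : Nonempty {v : E // v ≠ 0} := ⟨⟨x, hx⟩⟩
  have hbd : ∀ v : {v : E // v ≠ 0}, ⟪x, (v : E)⟫ / (a * ‖(v : E)‖) ≤ ‖x‖ / a := by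
    intro ⟨v, hv⟩
    have hv' : 0 < ‖v‖ := norm_pos_iff.mpr hv
    rw [div_le_div_iff₀ (by positivity) ha]
    calc ⟪x, v⟫ * a ≤ ‖x‖ * ‖v‖ * a := by
          have := real_inner_le_norm x v
          nlinarith
      _ = ‖x‖ * (a * ‖v‖) := by ring
  apply le_antisymm (ciSup_le hbd)
  refine le_ciSup_of_le ⟨‖x‖ / a, Set.forall_mem_range.mpr hbd⟩ ⟨x, hx⟩ (le_of_eq ?_)
  rw [real_inner_self_eq_norm_mul_norm]
  have hx' : 0 < ‖x‖ := norm_pos_iff.mpr hx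
  field_simp

/-- The inf of `‖e w‖/‖w‖` over nonzero `w` equals `‖e.symm‖⁻¹`. -/
lemma iInf_norm_div_aux {W V : Type*} [NormedAddCommGroup W] [InnerProductSpace ℝ W]
    [NormedAddCommGroup V] [InnerProductSpace ℝ V] [Nontrivial W]
    (e : W ≃L[ℝ] V) :
    (⨅ w : {w : W // w ≠ 0}, ‖e w‖ / ‖(w : W)‖) = ‖(e.symm : V →L[ℝ] W)‖⁻¹ := by
  haveI : Nonempty {w : W // w ≠ 0} := ⟨⟨(exists_ne 0).choose, (exists_ne 0).choose_spec⟩⟩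
  set S : V →L[ℝ] W := (e.symm : V →L[ℝ] W) with hS
  have hSpos : 0 < ‖S‖ := by
    obtain ⟨w, hw⟩ := exists_ne (0 : W)
    have : S (e w) ≠ 0 := by simpa [hS] using hw
    have := norm_pos_iff.mpr this
    by_contra h
    push_neg at h
    have h0 : ‖S‖ = 0 := le_antisymm h (norm_nonneg _)
    have := S.le_opNorm (e w)
    rw [h0, zero_mul] at this
    linarith
  have hlow : ∀ w : {w : W // w ≠ 0}, ‖S‖⁻¹ ≤ ‖e (w : W)‖ / ‖(w : W)‖ := by
    intro ⟨w, hw⟩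
    have hw' : 0 < ‖w‖ := norm_pos_iff.mpr hw
    have h1 : ‖w‖ ≤ ‖S‖ * ‖e w‖ := by
      have := S.le_opNorm (e w)
      simpa [hS] using this
    rw [le_div_iff₀ hw', inv_mul_le_iff₀ hSpos] at *
    linarith [h1]
  apply le_antisymm _ (le_ciInf hlow)
  by_contra h
  push_neg at h
  set c := ⨅ w : {w : W // w ≠ 0}, ‖e w‖ / ‖(w : W)‖ with hc
  have hcpos : 0 < c := lt_of_lt_of_le (by positivity) h.le
  have hbound : ‖S‖ ≤ c⁻¹ := by
    apply S.opNorm_le_bound (by positivity)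
    intro v
    rcases eq_or_ne v 0 with rfl | hv
    · simp
    · have hw : e.symm v ≠ 0 := by simpa using hv
      have h1 : c ≤ ‖e (e.symm v)‖ / ‖e.symm v‖ := ciInf_le_of_le
        ⟨0, Set.forall_mem_range.mpr fun w => by positivity⟩ ⟨e.symm v, hw⟩ le_rfl
      rw [e.apply_symm_apply] at h1
      have hw' : 0 < ‖e.symm v‖ := norm_pos_iff.mpr hw
      rw [le_div_iff₀ hw'] at h1
      have : ‖S v‖ = ‖e.symm v‖ := rfl
      rw [this]
      rw [inv_mul_eq_div, le_div_iff₀ hcpos]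
      linarith
  have : ‖S‖⁻¹ ≥ c := by
    rw [ge_iff_le, ← inv_inv c]
    exact inv_anti₀ (by positivity) hbound
  linarith

/-- **Interchanging the inf-sup spaces.**
If `W` and `V` are nontrivial real Hilbert spaces and the bounded bilinear form
`ℬ : W × V → ℝ` satisfies (BNB1) with some constant `c_B > 0` and (BNB2), then
`inf_{0≠w∈W} sup_{0≠v∈V} ℬ(w,v)/(‖w‖‖v‖) = inf_{0≠v∈V} sup_{0≠w∈W} ℬ(w,v)/(‖w‖‖v‖)`. -/
theorem infsup_interchange
    {W V : Type*} [NormedAddCommGroup W] [InnerProductSpace ℝ W] [CompleteSpace W]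
    [NormedAddCommGroup V] [InnerProductSpace ℝ V] [CompleteSpace V]
    [Nontrivial W] [Nontrivial V]
    (B : W →L[ℝ] V →L[ℝ] ℝ) (c_B : ℝ) (hc : 0 < c_B)
    (hBNB1 : ∀ w : W, c_B * ‖w‖ ≤ ⨆ v : {v : V // v ≠ 0}, B w v / ‖(v : V)‖)
    (hBNB2 : ∀ v : V, v ≠ 0 → ∃ w : W, 0 < B w v) :
    (⨅ w : {w : W // w ≠ 0}, ⨆ v : {v : V // v ≠ 0},
        B w v / (‖(w : W)‖ * ‖(v : V)‖)) =
      (⨅ v : {v : V // v ≠ 0}, ⨆ w : {w : W // w ≠ 0},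
        B w v / (‖(w : W)‖ * ‖(v : V)‖)) := by
  classical
  haveI : Nonempty {v : V // v ≠ 0} := ⟨⟨(exists_ne 0).choose, (exists_ne 0).choose_spec⟩⟩
  haveI : Nonempty {w : W // w ≠ 0} := ⟨⟨(exists_ne 0).choose, (exists_ne 0).choose_spec⟩⟩
  -- the Riesz representation operator T : W →L[ℝ] V with ⟪T w, v⟫ = B w v
  set Tlin : W →ₗ[ℝ] V :=
    { toFun := fun w => (InnerProductSpace.toDual ℝ V).symm (B w)
      map_add' := fun w₁ w₂ => by simp
      map_smul' := fun r w => by simp } with hTlin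
  set T : W →L[ℝ] V := Tlin.mkContinuous ‖B‖ (fun w => by
    have : ‖(InnerProductSpace.toDual ℝ V).symm (B w)‖ = ‖B w‖ :=
      LinearIsometryEquiv.norm_map _ _
    simp only [hTlin, LinearMap.coe_mk, AddHom.coe_mk]
    rw [this]
    exact B.le_opNorm w) with hT
  have hTB : ∀ (w : W) (v : V), ⟪T w, v⟫ = B w v := fun w v =>
    InnerProductSpace.toDual_symm_apply
  -- T is bounded below
  have hTlow : ∀ w : W, c_B * ‖w‖ ≤ ‖T w‖ := by
    intro w
    refine le_trans (hBNB1 w) (ciSup_le fun ⟨v, hv⟩ => ?_)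
    have hv' : 0 < ‖v‖ := norm_pos_iff.mpr hv
    rw [div_le_iff₀ hv', ← hTB]
    exact real_inner_le_norm _ _
  have hanti : AntilipschitzWith (⟨c_B, hc.le⟩ : NNReal)⁻¹ T := by
    apply T.antilipschitz_of_bound
    intro x
    have := hTlow x
    show ‖x‖ ≤ c_B⁻¹ * ‖T x‖
    rw [← div_eq_inv_mul, le_div_iff₀ hc]
    linarith
  -- T is injective
  have hker : LinearMap.ker (T : W →ₗ[ℝ] V) = ⊥ :=
    LinearMap.ker_eq_bot.mpr hanti.injective
  -- T is surjective
  have hclosed : IsClosed (LinearMap.range (T : W →ₗ[ℝ] V) : Set V) :=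
    hanti.isClosed_range T.uniformContinuous
  haveI : CompleteSpace (LinearMap.range (T : W →ₗ[ℝ] V) : Submodule ℝ V) := hclosed.completeSpace_coe
  have hrange : LinearMap.range (T : W →ₗ[ℝ] V) = ⊤ := by
    rw [← Submodule.orthogonal_eq_bot_iff]
    rw [Submodule.eq_bot_iff]
    intro v hv
    by_contra h0
    obtain ⟨w, hw⟩ := hBNB2 v h0
    have : ⟪T w, v⟫ = 0 := hv (T w) (LinearMap.mem_range_self _ w)
    rw [hTB] at this
    linarith
  set e : W ≃L[ℝ] V := ContinuousLinearEquiv.ofBijective T hker hrange with he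
  set S : V →L[ℝ] W := (e.symm : V →L[ℝ] W) with hS
  -- the adjoint equiv
  have hST : ∀ v, T (S v) = v := fun v => by
    have : T (e.symm v) = e (e.symm v) := rfl
    rw [hS]; simpa [this] using e.apply_symm_apply v
  have hTS : ∀ w, S (T w) = w := fun w => by
    have : T w = e w := rfl
    rw [hS, this]; exact e.symm_apply_apply w
  set e' : V ≃L[ℝ] W := ContinuousLinearEquiv.equivOfInverse (adjoint T) (adjoint S)
    (fun v => by
      apply ext_inner_right ℝ
      intro w
      rw [adjoint_inner_left, adjoint_inner_left, hST])
    (fun w => by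
      apply ext_inner_right ℝ
      intro v
      rw [adjoint_inner_left, adjoint_inner_left, hTS]) with he'
  -- rewrite the left inf
  have hL : ∀ w : {w : W // w ≠ 0},
      (⨆ v : {v : V // v ≠ 0}, B (w : W) v / (‖(w : W)‖ * ‖(v : V)‖)) = ‖e (w : W)‖ / ‖(w : W)‖ := by
    intro ⟨w, hw⟩
    show (⨆ v : {v : V // v ≠ 0}, B w (v : V) / (‖w‖ * ‖(v : V)‖)) = ‖e w‖ / ‖w‖
    have hew : e w = T w := rfl
    rw [hew]
    have hw' : 0 < ‖w‖ := norm_pos_iff.mpr hw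
    have hTw : T w ≠ 0 := by
      intro h
      have := hTlow w
      rw [h, norm_zero] at this
      nlinarith
    have : (⨆ v : {v : V // v ≠ 0}, ⟪T w, (v : V)⟫ / (‖w‖ * ‖(v : V)‖)) = ‖T w‖ / ‖w‖ :=
      iSup_inner_div_aux (T w) hTw ‖w‖ hw'
    rw [← this]
    congr 1
    ext v
    rw [hTB]
  -- rewrite the right inf
  have hR : ∀ v : {v : V // v ≠ 0},
      (⨆ w : {w : W // w ≠ 0}, B (w : W) (v : V) / (‖(w : W)‖ * ‖(v : V)‖)) = ‖e' (v : V)‖ / ‖(v : V)‖ := by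
    intro ⟨v, hv⟩
    show (⨆ w : {w : W // w ≠ 0}, B (w : W) v / (‖(w : W)‖ * ‖v‖)) = ‖e' v‖ / ‖v‖
    have hv' : 0 < ‖v‖ := norm_pos_iff.mpr hv
    have hAv : adjoint T v ≠ 0 := by
      intro h
      obtain ⟨w, hw⟩ := hBNB2 v hv
      have : ⟪adjoint T v, w⟫ = B w v := by rw [adjoint_inner_left, ← hTB, real_inner_comm]
      rw [h, inner_zero_left] at this
      linarith
    have h1 : (⨆ w : {w : W // w ≠ 0}, ⟪adjoint T v, (w : W)⟫ / (‖v‖ * ‖(w : W)‖)) =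
        ‖adjoint T v‖ / ‖v‖ := iSup_inner_div_aux (adjoint T v) hAv ‖v‖ hv'
    have he'v : e' v = adjoint T v := rfl
    rw [he'v, ← h1]
    congr 1
    ext w
    rw [adjoint_inner_left, ← hTB, real_inner_comm, mul_comm]
  rw [iInf_congr hL, iInf_congr hR, iInf_norm_div_aux e, iInf_norm_div_aux e']
  congr 1
  have hsymm : (e'.symm : W →L[ℝ] V) = adjoint S := by
    rw [he', ContinuousLinearEquiv.symm_equivOfInverse]
    rfl
  rw [hsymm, ← hS]
  exact (LinearIsometryEquiv.norm_map adjoint S).symm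
end

section
/- Assume the bounded bilinear form ℬ satisfies condition (BNB1) with constant c_B > 0 and condition (BNB2). Then for every continuous linear functional F ∈ V* there exists a unique w ∈ W such that ℬ(w,v) = F(v) for all v ∈ V, and this solution satisfies ‖w‖_W ≤ c_B⁻¹ ‖F‖_{V*}. -/
open RealInnerProductSpace InnerProductSpace

section Aux

variable {W V : Type*} [NormedAddCommGroup W] [InnerProductSpace ℝ W] [CompleteSpace W]
    [NormedAddCommGroup V] [InnerProductSpace ℝ V] [CompleteSpace V]

noncomputable def rieszOp (B : W →L[ℝ] V →L[ℝ] ℝ) : W →L[ℝ] V :=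
  { toLinearMap :=
    { toFun := fun w => (InnerProductSpace.toDual ℝ V).symm (B w)
      map_add' := fun x y => by simp
      map_smul' := fun c x => by simp }
    cont := ((InnerProductSpace.toDual ℝ V).symm.continuous).comp B.continuous }

lemma rieszOp_inner (B : W →L[ℝ] V →L[ℝ] ℝ) (w : W) (v : V) :
    ⟪rieszOp B w, v⟫_ℝ = B w v := by
  show ⟪(InnerProductSpace.toDual ℝ V).symm (B w), v⟫_ℝ = B w v
  rw [← InnerProductSpace.toDual_apply_apply, LinearIsometryEquiv.apply_symm_apply]

lemma rieszOp_norm (B : W →L[ℝ] V →L[ℝ] ℝ) (w : W) : ‖rieszOp B w‖ = ‖B w‖ := by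
  show ‖(InnerProductSpace.toDual ℝ V).symm (B w)‖ = ‖B w‖
  exact LinearIsometryEquiv.norm_map _ _

lemma bnb1_bounded_below (B : W →L[ℝ] V →L[ℝ] ℝ) (c_B : ℝ) (hc : 0 < c_B)
    (hBNB1 : ∀ w : W, c_B * ‖w‖ ≤ ⨆ v : {v : V // v ≠ 0}, B w v / ‖(v : V)‖) (w : W) :
    c_B * ‖w‖ ≤ ‖rieszOp B w‖ := by
  rw [rieszOp_norm]
  refine (hBNB1 w).trans ?_
  by_cases hne : Nonempty {v : V // v ≠ 0}
  · refine ciSup_le fun v => ?_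
    have hv : (0 : ℝ) < ‖(v : V)‖ := norm_pos_iff.mpr v.2
    rw [div_le_iff₀ hv]
    exact ((B w).le_opNorm v).trans' (le_abs_self _)
  · rw [not_nonempty_iff] at hne
    rw [Real.iSup_of_isEmpty]
    exact norm_nonneg _

end Aux

/-- **Well-posedness of the variational problem.**
If the bounded bilinear form `ℬ : W × V → ℝ` satisfies (BNB1) with constant `c_B > 0`
and (BNB2), then for every `F ∈ V*` there is a unique `w ∈ W` with `ℬ(w, v) = F(v)` for
all `v ∈ V`, and it satisfies `‖w‖_W ≤ c_B⁻¹ ‖F‖_{V*}`. -/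
theorem variational_wellposed
    {W V : Type*} [NormedAddCommGroup W] [InnerProductSpace ℝ W] [CompleteSpace W]
    [NormedAddCommGroup V] [InnerProductSpace ℝ V] [CompleteSpace V]
    (B : W →L[ℝ] V →L[ℝ] ℝ) (c_B : ℝ) (hc : 0 < c_B)
    (hBNB1 : ∀ w : W, c_B * ‖w‖ ≤ ⨆ v : {v : V // v ≠ 0}, B w v / ‖(v : V)‖)
    (hBNB2 : ∀ v : V, v ≠ 0 → ∃ w : W, 0 < B w v)
    (F : V →L[ℝ] ℝ) :
    ∃ w : W, (∀ v : V, B w v = F v) ∧ ‖w‖ ≤ c_B⁻¹ * ‖F‖ ∧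
      (∀ w' : W, (∀ v : V, B w' v = F v) → w' = w) := by
  set A := rieszOp B with hA
  have hbb : ∀ w : W, c_B * ‖w‖ ≤ ‖A w‖ := bnb1_bounded_below B c_B hc hBNB1
  -- antilipschitz / injectivity
  have hanti : AntilipschitzWith (c_B⁻¹).toNNReal A := by
    refine A.antilipschitz_of_bound fun w => ?_
    rw [Real.coe_toNNReal _ (le_of_lt (inv_pos.mpr hc)), ← div_eq_inv_mul,
      le_div_iff₀ hc, mul_comm]
    exact hbb w
  have hinj : Function.Injective A := hanti.injective
  -- range is closed, hence complete
  have hclosed : IsClosed (LinearMap.range (A : W →ₗ[ℝ] V) : Set V) :=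
    by rw [LinearMap.coe_range]; exact hanti.isClosed_range A.uniformContinuous
  haveI := hclosed.completeSpace_coe
  -- range is all of V
  have hrange : LinearMap.range (A : W →ₗ[ℝ] V) = ⊤ := by
    rw [← Submodule.orthogonal_eq_bot_iff]
    rw [Submodule.eq_bot_iff]
    intro v hv
    by_contra hvne
    obtain ⟨w, hw⟩ := hBNB2 v hvne
    have h0 : ⟪A w, v⟫_ℝ = 0 := hv (A w) ⟨w, rfl⟩
    rw [rieszOp_inner] at h0
    exact absurd h0 (ne_of_gt hw)
  -- solve A w = riesz representative of F
  set f := (InnerProductSpace.toDual ℝ V).symm F with hf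
  obtain ⟨w, hw : A w = f⟩ := (LinearMap.range_eq_top.mp hrange) f
  have hsol : ∀ v : V, B w v = F v := by
    intro v
    rw [← rieszOp_inner B w v, ← hA, hw, hf]
    simp [← InnerProductSpace.toDual_apply_apply]
  refine ⟨w, hsol, ?_, ?_⟩
  · have h1 : c_B * ‖w‖ ≤ ‖F‖ := by
      have := hbb w
      rwa [hw, hf, LinearIsometryEquiv.norm_map] at this
    rw [← div_eq_inv_mul, le_div_iff₀ hc, mul_comm]
    exact h1
  · intro w' hw'
    apply hinj
    rw [hw]
    apply (InnerProductSpace.toDual ℝ V).injective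
    ext v
    rw [InnerProductSpace.toDual_apply_apply, rieszOp_inner, hw' v, hf]
    simp
end

section
/- Assume the bounded bilinear form ℬ satisfies condition (BNB1) with constant c_B > 0 and condition (BNB2). Then for every continuous linear functional G ∈ W* the adjoint variational problem is well-posed: there exists a unique v ∈ V such that ℬ(w,v) = G(w) for all w ∈ W, and this solution satisfies ‖v‖_V ≤ c_B⁻¹ ‖G‖_{W*}. -/
/-- **Well-posedness of the adjoint variational problem.**
If the bounded bilinear form `ℬ : W × V → ℝ` satisfies (BNB1) with constant `c_B > 0`
and (BNB2), then for every `G ∈ W*` there is a unique `v ∈ V` with `ℬ(w, v) = G(w)` for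
all `w ∈ W`, and it satisfies `‖v‖_V ≤ c_B⁻¹ ‖G‖_{W*}`. -/
theorem adjoint_variational_wellposed
    {W V : Type*} [NormedAddCommGroup W] [InnerProductSpace ℝ W] [CompleteSpace W]
    [NormedAddCommGroup V] [InnerProductSpace ℝ V] [CompleteSpace V]
    (B : W →L[ℝ] V →L[ℝ] ℝ) (c_B : ℝ) (hc : 0 < c_B)
    (hBNB1 : ∀ w : W, c_B * ‖w‖ ≤ ⨆ v : {v : V // v ≠ 0}, B w v / ‖(v : V)‖)
    (hBNB2 : ∀ v : V, v ≠ 0 → ∃ w : W, 0 < B w v)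
    (G : W →L[ℝ] ℝ) :
    ∃ v : V, (∀ w : W, B w v = G w) ∧ ‖v‖ ≤ c_B⁻¹ * ‖G‖ ∧
      (∀ v' : V, (∀ w : W, B w v' = G w) → v' = v) := by
  classical
  set A : W →L[ℝ] V :=
    ((InnerProductSpace.toDual ℝ V).symm.toContinuousLinearEquiv :
      (V →L[ℝ] ℝ) ≃L[ℝ] V).toContinuousLinearMap.comp B with hA
  have hAinner : ∀ (w : W) (u : V), (inner ℝ (A w) u : ℝ) = B w u := by
    intro w u
    have h1 : A w = (InnerProductSpace.toDual ℝ V).symm (B w) := rfl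
    rw [h1, ← InnerProductSpace.toDual_apply_apply, LinearIsometryEquiv.apply_symm_apply]
  -- lower bound: c_B * ‖w‖ ≤ ‖A w‖
  have hlow : ∀ w : W, c_B * ‖w‖ ≤ ‖A w‖ := by
    intro w
    refine (hBNB1 w).trans ?_
    refine Real.iSup_le (fun v => ?_) (norm_nonneg _)
    have hv : (0 : ℝ) < ‖(v : V)‖ := norm_pos_iff.mpr v.2
    rw [div_le_iff₀ hv, ← hAinner w v]
    exact real_inner_le_norm _ _
  have hbound : ∀ w : W, ‖w‖ ≤ c_B⁻¹ * ‖A w‖ := by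
    intro w
    rw [inv_mul_eq_div, le_div_iff₀ hc]
    linarith [hlow w]
  have hanti : AntilipschitzWith ⟨c_B⁻¹, by positivity⟩ A :=
    A.antilipschitz_of_bound (by exact_mod_cast hbound)
  -- injectivity
  have hker : LinearMap.ker (A : W →ₗ[ℝ] V) = ⊥ := by
    rw [Submodule.eq_bot_iff]
    intro x hx
    exact hanti.injective (by simpa using hx)
  -- range is closed
  have hclosed : IsClosed (Set.range A) := hanti.isClosed_range A.uniformContinuous
  -- range is all of V
  have hrange : LinearMap.range (A : W →ₗ[ℝ] V) = ⊤ := by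
    have hcl2 : IsClosed ((LinearMap.range (A : W →ₗ[ℝ] V) : Submodule ℝ V) : Set V) := by
      simpa [LinearMap.coe_range] using hclosed
    have : CompleteSpace (LinearMap.range (A : W →ₗ[ℝ] V) : Submodule ℝ V) := hcl2.completeSpace_coe
    rw [← Submodule.orthogonal_eq_bot_iff]
    rw [Submodule.eq_bot_iff]
    intro d hd
    by_contra hd0
    obtain ⟨w, hw⟩ := hBNB2 d hd0
    have : (inner ℝ (A w) d : ℝ) = 0 :=
      (Submodule.mem_orthogonal _ d).mp hd (A w) (LinearMap.mem_range_self _ w)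
    rw [hAinner] at this
    linarith
  -- package as equiv
  set E : W ≃L[ℝ] V := ContinuousLinearEquiv.ofBijective A hker hrange with hE
  have hEA : ∀ w : W, E w = A w := fun w => rfl
  -- the solution
  set v : V := (InnerProductSpace.toDual ℝ V).symm (G.comp (E.symm : V →L[ℝ] W)) with hv
  have hsol : ∀ w : W, B w v = G w := by
    intro w
    rw [← hAinner, real_inner_comm]
    have h1 : (inner ℝ v (A w) : ℝ) = G.comp (E.symm : V →L[ℝ] W) (A w) := by
      rw [hv, ← InnerProductSpace.toDual_apply_apply, LinearIsometryEquiv.apply_symm_apply]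
    rw [h1]
    show G (E.symm (A w)) = G w
    rw [← hEA, ContinuousLinearEquiv.symm_apply_apply]
  refine ⟨v, hsol, ?_, ?_⟩
  · -- norm bound
    obtain ⟨w, hw⟩ : ∃ w : W, A w = v := by
      have := hrange ▸ Submodule.mem_top (x := v) (R := ℝ)
      exact this
    have h1 : ‖v‖ ^ 2 = G w := by
      rw [← real_inner_self_eq_norm_sq]
      calc (inner ℝ v v : ℝ) = inner ℝ (A w) v := by rw [hw]
        _ = B w v := hAinner w v
        _ = G w := hsol w
    have h2 : ‖v‖ ^ 2 ≤ c_B⁻¹ * ‖G‖ * ‖v‖ := by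
      calc ‖v‖ ^ 2 = G w := h1
        _ ≤ ‖G w‖ := le_abs_self _
        _ ≤ ‖G‖ * ‖w‖ := G.le_opNorm w
        _ ≤ ‖G‖ * (c_B⁻¹ * ‖A w‖) :=
            mul_le_mul_of_nonneg_left (hbound w) (norm_nonneg G)
        _ = c_B⁻¹ * ‖G‖ * ‖v‖ := by rw [hw]; ring
    rcases eq_or_lt_of_le (norm_nonneg v) with h0 | h0
    · rw [← h0]; positivity
    · exact le_of_mul_le_mul_right (by nlinarith) h0
  · intro v' hv'
    by_contra hne
    have : v' - v ≠ 0 := sub_ne_zero.mpr hne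
    obtain ⟨w, hw⟩ := hBNB2 _ this
    rw [map_sub, hv' w, hsol w, sub_self] at hw
    exact lt_irrefl 0 hw
end

section
/- Let E be a real Hilbert space and let P : E → E be a continuous linear idempotent operator (P ∘ P = P) with P ≠ 0 and P ≠ id. Then the operator norms of P and of its complementary projection coincide: ‖id − P‖ = ‖P‖. -/
open scoped RealInnerProductSpace

lemma aux_norm_le
    {E : Type*} [NormedAddCommGroup E] [InnerProductSpace ℝ E] [CompleteSpace E]
    (P : E →L[ℝ] E) (hidem : P ∘L P = P) (hP0 : P ≠ 0) :
    ‖ContinuousLinearMap.id ℝ E - P‖ ≤ ‖P‖ := by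
  have hPP : ∀ x, P (P x) = P x := fun x => congrFun (congrArg (⇑) hidem) x
  have hP1 : (1 : ℝ) ≤ ‖P‖ := by
    obtain ⟨x, hx⟩ : ∃ x, P x ≠ 0 := by
      by_contra h
      push_neg at h
      exact hP0 (ContinuousLinearMap.ext fun x => by simp [h x])
    have h1 := P.le_opNorm (P x)
    rw [hPP] at h1
    have h2 : (0 : ℝ) < ‖P x‖ := norm_pos_iff.mpr hx
    nlinarith
  set K := LinearMap.ker ((ContinuousLinearMap.id ℝ E - P : E →L[ℝ] E) : E →ₗ[ℝ] E) with hKdef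
  have hmemK : ∀ y, y ∈ K ↔ P y = y := by
    intro y
    constructor
    · intro hy
      have h0 : (ContinuousLinearMap.id ℝ E - P) y = 0 := hy
      rw [ContinuousLinearMap.sub_apply, ContinuousLinearMap.id_apply, sub_eq_zero] at h0
      exact h0.symm
    · intro hy
      show (ContinuousLinearMap.id ℝ E - P) y = 0
      rw [ContinuousLinearMap.sub_apply, ContinuousLinearMap.id_apply, hy, sub_self]
  have hPxK : ∀ x, P x ∈ K := fun x => (hmemK (P x)).mpr (hPP x)
  haveI : CompleteSpace K :=
    (ContinuousLinearMap.isClosed_ker (ContinuousLinearMap.id ℝ E - P)).completeSpace_coe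
  -- key inequality
  have key : ∀ v ∈ Kᗮ, ‖P v‖ ^ 2 ≤ (‖P‖ ^ 2 - 1) * ‖v‖ ^ 2 := by
    intro v hv
    by_cases hPv : P v = 0
    · have : (0:ℝ) ≤ (‖P‖ ^ 2 - 1) * ‖v‖ ^ 2 := by
        have : (0:ℝ) ≤ ‖P‖ ^ 2 - 1 := by nlinarith
        positivity
      simpa [hPv] using this
    · have hv0 : v ≠ 0 := by rintro rfl; simp at hPv
      set s : ℝ := ‖P v‖ with hs
      set c : ℝ := ‖v‖ with hc
      have hspos : 0 < s := norm_pos_iff.mpr hPv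
      have hcpos : 0 < c := norm_pos_iff.mpr hv0
      set t : ℝ := c ^ 2 / s ^ 2 with ht
      have htpos : 0 < t := by positivity
      set x : E := t • P v + v with hx
      have hinner : ⟪t • P v, v⟫ = 0 := by
        rw [real_inner_smul_left]
        rw [(Submodule.mem_orthogonal K v).mp hv (P v) (hPxK v)]
        ring
      have hxnorm : ‖x‖ ^ 2 = t ^ 2 * s ^ 2 + c ^ 2 := by
        rw [hx, norm_add_sq_real, hinner, norm_smul]
        rw [Real.norm_eq_abs, abs_of_pos htpos]
        ring
      have hPx : P x = (t + 1) • P v := by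
        rw [hx]
        simp [map_add, map_smul, hPP, add_smul, one_smul]
      have hPxnorm : ‖P x‖ ^ 2 = (t + 1) ^ 2 * s ^ 2 := by
        rw [hPx, norm_smul, Real.norm_eq_abs, abs_of_pos (by positivity : (0:ℝ) < t + 1)]
        ring
      have hle := P.le_opNorm x
      have hle2 : ‖P x‖ ^ 2 ≤ ‖P‖ ^ 2 * ‖x‖ ^ 2 := by
        have h0 : (0:ℝ) ≤ ‖P x‖ := norm_nonneg _
        nlinarith [norm_nonneg x, P.opNorm_nonneg]
      rw [hPxnorm, hxnorm] at hle2
      have hts : t * s ^ 2 = c ^ 2 := by rw [ht]; exact div_mul_cancel₀ _ (by positivity)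
      have hts2 : t ^ 2 * s ^ 2 = t * c ^ 2 := by rw [← hts]; ring
      have hrw : ‖P‖ ^ 2 * (t ^ 2 * s ^ 2 + c ^ 2) = (t + 1) * (‖P‖ ^ 2 * c ^ 2) := by
        rw [hts2]; ring
      have hrw2 : (t + 1) ^ 2 * s ^ 2 = (t + 1) * ((t + 1) * s ^ 2) := by ring
      rw [hrw, hrw2] at hle2
      have hpos : (0:ℝ) < t + 1 := by positivity
      have h6 : (t + 1) * s ^ 2 ≤ ‖P‖ ^ 2 * c ^ 2 := le_of_mul_le_mul_left hle2 hpos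
      have h7 : (t + 1) * s ^ 2 = c ^ 2 + s ^ 2 := by rw [add_mul, hts, one_mul]
      linarith
  refine ContinuousLinearMap.opNorm_le_bound _ (by linarith) fun x => ?_
  obtain ⟨u, huK, v, hvK, rfl⟩ := K.exists_add_mem_mem_orthogonal x
  have hPu : P u = u := (hmemK u).mp huK
  have hQ : (ContinuousLinearMap.id ℝ E - P) (u + v) = v - P v := by
    rw [ContinuousLinearMap.sub_apply, ContinuousLinearMap.id_apply, map_add, hPu]
    abel
  rw [hQ]
  have hinner2 : ⟪v, P v⟫ = 0 := by
    rw [real_inner_comm]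
    exact (Submodule.mem_orthogonal K v).mp hvK (P v) (hPxK v)
  have h1 : ‖v - P v‖ ^ 2 = ‖v‖ ^ 2 + ‖P v‖ ^ 2 := by
    rw [norm_sub_sq_real, hinner2]; ring
  have h2 : ‖u + v‖ ^ 2 = ‖u‖ ^ 2 + ‖v‖ ^ 2 := by
    have h0 : ⟪u, v⟫ = 0 := (Submodule.mem_orthogonal K v).mp hvK u huK
    rw [norm_add_sq_real, h0]; ring
  have h3 := key v hvK
  have h4 : ‖v - P v‖ ^ 2 ≤ (‖P‖ * ‖u + v‖) ^ 2 := by nlinarith [norm_nonneg u, norm_nonneg v]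
  have h5 : (0:ℝ) ≤ ‖P‖ * ‖u + v‖ := by positivity
  nlinarith [norm_nonneg (v - P v)]

/-- **Norm of a complementary projection (Kato's lemma).**
If `P` is a continuous linear idempotent on a real Hilbert space `E` with `P ≠ 0` and
`P ≠ id`, then `‖id − P‖ = ‖P‖`. -/
theorem norm_id_sub_projection
    {E : Type*} [NormedAddCommGroup E] [InnerProductSpace ℝ E] [CompleteSpace E]
    (P : E →L[ℝ] E) (hidem : P ∘L P = P)
    (hP0 : P ≠ 0) (hPid : P ≠ ContinuousLinearMap.id ℝ E) :
    ‖ContinuousLinearMap.id ℝ E - P‖ = ‖P‖ := by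
  have h1 := aux_norm_le P hidem hP0
  set Q := ContinuousLinearMap.id ℝ E - P with hQ
  have hPP : ∀ x, P (P x) = P x := fun x => congrFun (congrArg (⇑) hidem) x
  have hQidem : Q ∘L Q = Q := by
    ext x
    show Q (Q x) = Q x
    simp only [hQ, ContinuousLinearMap.sub_apply, ContinuousLinearMap.id_apply, map_sub, hPP x]
    abel
  have hQ0 : Q ≠ 0 := by
    intro h
    exact hPid (by rw [hQ] at h; rw [sub_eq_zero] at h; exact h.symm)
  have h2 := aux_norm_le Q hQidem hQ0
  have hP : ContinuousLinearMap.id ℝ E - Q = P := by rw [hQ]; abel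
  rw [hP] at h2
  linarith
end

section
/- Let E be a real Hilbert space and let P : E → E be a continuous linear idempotent operator (P ∘ P = P) with P ≠ 0, and let Y_h := range(P). Then for every u ∈ E one has the quasi-optimality estimate ‖u − P u‖ ≤ ‖P‖ · inf_{y ∈ Y_h} ‖u − y‖. -/
/-- Purely real-arithmetic core of Kato's lemma. -/
lemma kato_real_aux (K a b c N : ℝ) (hK : 1 ≤ K) (hb : 0 ≤ b) (hN : 0 ≤ N)
    (h1 : a ^ 2 * b ^ 2 ≤ K ^ 2 * (a ^ 2 * b ^ 2 - c ^ 2))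
    (hNsq : N ^ 2 = a ^ 2 + 2 * c + b ^ 2) :
    b ≤ K * N := by
  have hK2 : 1 ≤ K ^ 2 := by nlinarith
  have hS : 0 ≤ K ^ 2 * a ^ 2 + (K ^ 2 - 1) * b ^ 2 := by
    nlinarith [sq_nonneg a, sq_nonneg b, mul_nonneg (sq_nonneg K) (sq_nonneg a)]
  have hD : 0 ≤ (K ^ 2 * a ^ 2 + (K ^ 2 - 1) * b ^ 2) ^ 2 - 4 * K ^ 4 * c ^ 2 := by
    nlinarith [sq_nonneg (K ^ 2 * a ^ 2 - (K ^ 2 - 1) * b ^ 2), sq_nonneg K,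
      mul_le_mul_of_nonneg_left h1 (sq_nonneg (2 * K))]
  have hsq : b ^ 2 ≤ K ^ 2 * (a ^ 2 + 2 * c + b ^ 2) := by nlinarith [hS, hD]
  rw [← hNsq] at hsq
  have hKN : 0 ≤ K * N := mul_nonneg (by linarith) hN
  nlinarith [hsq, hb, hKN]

/-- Kato's lemma: for a nonzero idempotent on a real Hilbert space,
`‖x - P x‖ ≤ ‖P‖ * ‖x‖`. -/
lemma idempotent_compl_norm_le
    {E : Type*} [NormedAddCommGroup E] [InnerProductSpace ℝ E]
    (P : E →L[ℝ] E) (hidem : P ∘L P = P) (hP0 : P ≠ 0)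
    (x : E) : ‖x - P x‖ ≤ ‖P‖ * ‖x‖ := by
  have hPpos : (0 : ℝ) < ‖P‖ := norm_pos_iff.mpr hP0
  have hK : (1 : ℝ) ≤ ‖P‖ := by
    have h := ContinuousLinearMap.opNorm_comp_le P P
    rw [hidem] at h
    nlinarith
  set v := P x with hvdef
  set w := x - P x with hwdef
  have hPP : ∀ z : E, P (P z) = P z := by
    intro z
    have := congrArg (fun Q : E →L[ℝ] E => Q z) hidem
    simpa [ContinuousLinearMap.comp_apply] using this
  have hPw : P w = 0 := by
    rw [hwdef, map_sub, hPP, sub_self]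
  have hPv : P v = v := hPP x
  have hxvw : x = v + w := by rw [hvdef, hwdef]; abel
  have H : ∀ t : ℝ, ‖v‖ ≤ ‖P‖ * ‖v + t • w‖ := by
    intro t
    have h := P.le_opNorm (v + t • w)
    rwa [map_add, map_smul, hPv, hPw, smul_zero, add_zero] at h
  rw [hxvw]
  -- goal : ‖w‖ ≤ ‖P‖ * ‖v + w‖
  rcases eq_or_ne w 0 with hw0 | hw0
  · simp only [hw0, norm_zero, add_zero]
    positivity
  have hb : (0 : ℝ) < ‖w‖ := norm_pos_iff.mpr hw0
  have hnorm_sq : ∀ t : ℝ, ‖v + t • w‖ ^ 2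
      = ‖v‖ ^ 2 + 2 * t * (inner ℝ v w : ℝ) + t ^ 2 * ‖w‖ ^ 2 := by
    intro t
    rw [norm_add_sq_real, real_inner_smul_right, norm_smul, Real.norm_eq_abs,
      mul_pow, sq_abs]
    ring
  have h1 : ‖v‖ ^ 2 * ‖w‖ ^ 2
      ≤ ‖P‖ ^ 2 * (‖v‖ ^ 2 * ‖w‖ ^ 2 - (inner ℝ v w : ℝ) ^ 2) := by
    set c : ℝ := inner ℝ v w with hcdef
    have h := H (-c / ‖w‖ ^ 2)
    have hsq : ‖v‖ ^ 2 ≤ ‖P‖ ^ 2 * ‖v + (-c / ‖w‖ ^ 2) • w‖ ^ 2 := by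
      nlinarith [h, norm_nonneg v, norm_nonneg (v + (-c / ‖w‖ ^ 2) • w), hPpos.le]
    rw [hnorm_sq] at hsq
    have hb2 : (0 : ℝ) < ‖w‖ ^ 2 := by positivity
    have := mul_le_mul_of_nonneg_right hsq hb2.le
    calc ‖v‖ ^ 2 * ‖w‖ ^ 2
        ≤ ‖P‖ ^ 2 * (‖v‖ ^ 2 + 2 * (-c / ‖w‖ ^ 2) * c + (-c / ‖w‖ ^ 2) ^ 2 * ‖w‖ ^ 2)
          * ‖w‖ ^ 2 := this
      _ = ‖P‖ ^ 2 * (‖v‖ ^ 2 * ‖w‖ ^ 2 - c ^ 2) := by field_simp; ring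
  have hvw_sq : ‖v + w‖ ^ 2 = ‖v‖ ^ 2 + 2 * (inner ℝ v w : ℝ) + ‖w‖ ^ 2 := by
    have := hnorm_sq 1
    simpa using this
  exact kato_real_aux ‖P‖ ‖v‖ ‖w‖ (inner ℝ v w) ‖v + w‖ hK (norm_nonneg w)
    (norm_nonneg _) h1 hvw_sq

/-- **Quasi-optimality of an idempotent operator.**
If `P` is a continuous linear idempotent on a real Hilbert space `E` with `P ≠ 0`, and
`Y_h := range P`, then for every `u ∈ E` one has
`‖u − P u‖ ≤ ‖P‖ · inf_{y ∈ Y_h} ‖u − y‖`. -/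
theorem projection_quasi_optimality
    {E : Type*} [NormedAddCommGroup E] [InnerProductSpace ℝ E] [CompleteSpace E]
    (P : E →L[ℝ] E) (hidem : P ∘L P = P) (hP0 : P ≠ 0)
    (u : E) :
    ‖u - P u‖ ≤ ‖P‖ * ⨅ y : LinearMap.range (P : E →ₗ[ℝ] E), ‖u - (y : E)‖ := by
  have hPpos : (0 : ℝ) < ‖P‖ := norm_pos_iff.mpr hP0
  have hne : Nonempty (LinearMap.range (P : E →ₗ[ℝ] E)) := ⟨0, Submodule.zero_mem _⟩
  have key : ∀ y : LinearMap.range (P : E →ₗ[ℝ] E), ‖u - P u‖ / ‖P‖ ≤ ‖u - (y : E)‖ := by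
    rintro ⟨y, z, rfl⟩
    have hPy : P (P z) = P z := by
      have := congrArg (fun Q : E →L[ℝ] E => Q z) hidem
      simpa [ContinuousLinearMap.comp_apply] using this
    have h := idempotent_compl_norm_le P hidem hP0 (u - P z)
    rw [map_sub, hPy] at h
    have heq : u - P z - (P u - P z) = u - P u := by abel
    rw [heq] at h
    rw [div_le_iff₀ hPpos]
    calc ‖u - P u‖ ≤ ‖P‖ * ‖u - P z‖ := h
      _ = ‖u - P z‖ * ‖P‖ := mul_comm _ _
  have hinf : ‖u - P u‖ / ‖P‖ ≤ ⨅ y : LinearMap.range (P : E →ₗ[ℝ] E), ‖u - (y : E)‖ :=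
    le_ciInf key
  calc ‖u - P u‖ = ‖P‖ * (‖u - P u‖ / ‖P‖) := by field_simp
    _ ≤ ‖P‖ * ⨅ y : LinearMap.range (P : E →ₗ[ℝ] E), ‖u - (y : E)‖ :=
      mul_le_mul_of_nonneg_left hinf hPpos.le
end

section
/- Let Y and X be real Hilbert spaces, let Y_h ⊆ Y and X_h ⊆ X be finite-dimensional subspaces with dim Y_h = dim X_h and Y_h ≠ {0}, and let ℬ : Y × X → ℝ be a bilinear form such that |ℬ(y, x_h)| ≤ C ‖y‖_Y ‖x_h‖_X for all y ∈ Y and x_h ∈ X_h, and such that the discrete inf-sup condition holds with constant c > 0: for every y_h ∈ Y_h, sup_{0≠x_h∈X_h} ℬ(y_h, x_h)/‖x_h‖_X ≥ c ‖y_h‖_Y. Then for every u ∈ Y there exists a unique Petrov–Galerkin approximation U ∈ Y_h satisfying ℬ(U, x_h) = ℬ(u, x_h) for all x_h ∈ X_h, and it satisfies the quasi-optimal error bound ‖u − U‖_Y ≤ (C/c) · inf_{y_h ∈ Y_h} ‖u − y_h‖_Y. -/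
lemma aux_arith_pg {a t q k : ℝ} (hane : 0 ≤ a) (hqpos : 0 < q) (hk : 1 ≤ k)
    (hCS1 : t ≤ a * q)
    (key : (a^2 - 2*t + q^2) * q^2 ≤ k^2 * (a^2 * q^2 - t^2)) :
    q ≤ k * a := by
  have hA := mul_le_mul_of_nonneg_left key (sq_nonneg k)
  have hB := sq_nonneg (k^2*t - q^2)
  have h1 : k^2*a^2*q^2 + k^2*q^4 ≤ k^4*a^2*q^2 + q^4 := by nlinarith [hA, hB]
  have hka : 0 ≤ k * a := mul_nonneg (by linarith) hane
  have hq2 : (0:ℝ) < q^2 := by positivity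
  rcases eq_or_lt_of_le hk with hk1 | hk1
  · -- k = 1
    rw [← hk1] at key ⊢
    have ht2 : t = q^2 := by nlinarith [sq_nonneg (t - q^2)]
    have hqa : q ≤ a := le_of_mul_le_mul_right (by nlinarith) hqpos
    linarith
  · have hk2 : 1 < k^2 := by nlinarith
    have q4le : q^4 ≤ k^2*a^2*q^2 :=
      le_of_mul_le_mul_left (by nlinarith) (by linarith : (0:ℝ) < k^2 - 1)
    have q2le : q^2 ≤ (k*a)^2 := by
      have := le_of_mul_le_mul_right (by nlinarith : q^2 * q^2 ≤ (k^2*a^2) * q^2) hq2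
      nlinarith [this]
    by_contra hcon
    push_neg at hcon
    nlinarith [mul_lt_mul_of_pos_left hcon (lt_of_le_of_lt hka hcon)]

/-- Geometric lemma (Xu–Zikatanov / Kato trick): if `‖w‖ ≤ k‖e - s•(e-w)‖` for all `s`
and `k ≥ 1`, then `‖e - w‖ ≤ k‖e‖`. -/
lemma aux_geom_pg {E : Type*} [NormedAddCommGroup E] [InnerProductSpace ℝ E]
    (e w : E) (k : ℝ) (hk : 1 ≤ k)
    (h : ∀ s : ℝ, ‖w‖ ≤ k * ‖e - s • (e - w)‖) :
    ‖e - w‖ ≤ k * ‖e‖ := by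
  by_cases h0 : e - w = 0
  · rw [h0, norm_zero]
    exact mul_nonneg (by linarith) (norm_nonneg _)
  · set v := e - w with hv
    set q := ‖v‖ with hq
    have hqpos : 0 < q := norm_pos_iff.mpr h0
    set t := (inner ℝ e v : ℝ) with ht
    set a := ‖e‖ with ha
    have hCS : |t| ≤ a * q := abs_real_inner_le_norm e v
    have hCS1 : t ≤ a * q := (abs_le.mp hCS).2
    have hw : w = e - v := by rw [hv]; abel
    have hw2 : ‖w‖^2 = a^2 - 2*t + q^2 := by
      rw [hw, @norm_sub_sq_real, ← ht, ← ha, ← hq]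
    set s : ℝ := t / q^2 with hs
    have hN2 : ‖e - s • v‖^2 = a^2 - t^2/q^2 := by
      rw [@norm_sub_sq_real, real_inner_smul_right, norm_smul, ← ht, ← ha, ← hq]
      rw [Real.norm_eq_abs, mul_pow, sq_abs, hs]
      field_simp
      ring
    have hks := h s
    have hsq : ‖w‖^2 ≤ k^2 * ‖e - s • v‖^2 := by
      have h1 : ‖w‖ * ‖w‖ ≤ (k * ‖e - s • v‖) * (k * ‖e - s • v‖) :=
        mul_self_le_mul_self (norm_nonneg _) hks
      nlinarith [h1]
    rw [hw2, hN2] at hsq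
    have key : (a^2 - 2*t + q^2) * q^2 ≤ k^2 * (a^2 * q^2 - t^2) := by
      have hq2 : (0:ℝ) < q^2 := by positivity
      have := mul_le_mul_of_nonneg_right hsq (le_of_lt hq2)
      calc (a^2 - 2*t + q^2) * q^2 ≤ (k^2 * (a^2 - t^2/q^2)) * q^2 := this
        _ = k^2 * (a^2 * q^2 - t^2) := by field_simp
    have := aux_arith_pg (norm_nonneg e) hqpos hk hCS1 key
    calc ‖e - w‖ = q := by rw [← hv, ← hq]
      _ ≤ k * a := this


/-- **Quasi-optimality of the Petrov–Galerkin approximation.**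
`Y`, `X` are real Hilbert spaces, `Y_h ⊆ Y`, `X_h ⊆ X` are finite-dimensional subspaces of
the same dimension with `Y_h ≠ {0}`, and `B : Y × X → ℝ` is a bilinear form which is bounded
on `Y × X_h` with constant `C` and satisfies the discrete inf-sup condition on `Y_h × X_h`
with constant `c > 0`. Then for every `u ∈ Y` there is a unique Petrov–Galerkin approximation
`U ∈ Y_h` with `B(U, x_h) = B(u, x_h)` for all `x_h ∈ X_h`, and
`‖u − U‖ ≤ (C/c) · inf_{y_h ∈ Y_h} ‖u − y_h‖`. -/
theorem petrov_galerkin_quasi_optimality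
    {Y X : Type*} [NormedAddCommGroup Y] [InnerProductSpace ℝ Y] [CompleteSpace Y]
    [NormedAddCommGroup X] [InnerProductSpace ℝ X] [CompleteSpace X]
    (Yh : Submodule ℝ Y) (Xh : Submodule ℝ X)
    [FiniteDimensional ℝ Yh] [FiniteDimensional ℝ Xh]
    (hdim : Module.finrank ℝ Yh = Module.finrank ℝ Xh) (hYh : Yh ≠ ⊥)
    (B : Y →ₗ[ℝ] X →ₗ[ℝ] ℝ) (C c : ℝ) (hc : 0 < c)
    (hbdd : ∀ y : Y, ∀ x ∈ Xh, |B y x| ≤ C * ‖y‖ * ‖x‖)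
    (hinfsup : ∀ y ∈ Yh,
      c * ‖y‖ ≤ ⨆ x : {x : X // x ∈ Xh ∧ x ≠ 0}, B y x / ‖(x : X)‖)
    (u : Y) :
    ∃ U : Y, U ∈ Yh ∧ (∀ x ∈ Xh, B U x = B u x) ∧
      (∀ U' : Y, U' ∈ Yh → (∀ x ∈ Xh, B U' x = B u x) → U' = U) ∧
      ‖u - U‖ ≤ (C / c) * ⨅ y : Yh, ‖u - (y : Y)‖ := by
  classical
  obtain ⟨y0, hy0m, hy0⟩ := Submodule.exists_mem_ne_zero_of_ne_bot hYh
  have hy0n : 0 < ‖y0‖ := norm_pos_iff.mpr hy0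
  -- the index type of the sup is nonempty
  haveI hne : Nonempty {x : X // x ∈ Xh ∧ x ≠ 0} := by
    by_contra hemp
    rw [not_nonempty_iff] at hemp
    have h0 := hinfsup y0 hy0m
    rw [Real.iSup_of_isEmpty] at h0
    nlinarith
  -- key stability estimate
  have key : ∀ w ∈ Yh, ∀ z : Y, (∀ x ∈ Xh, B w x = B z x) → c * ‖w‖ ≤ C * ‖z‖ := by
    intro w hw z hwz
    have h1 := hinfsup w hw
    have h2 : (⨆ x : {x : X // x ∈ Xh ∧ x ≠ 0}, B w x / ‖(x : X)‖) ≤ C * ‖z‖ := by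
      apply ciSup_le
      rintro ⟨x, hx, hx0⟩
      have hxn : 0 < ‖x‖ := norm_pos_iff.mpr hx0
      rw [hwz x hx, div_le_iff₀ hxn]
      calc B z x ≤ |B z x| := le_abs_self _
        _ ≤ C * ‖z‖ * ‖x‖ := hbdd z x hx
    linarith
  have hcC : c ≤ C := by
    have := key y0 hy0m y0 (fun x _ => rfl)
    nlinarith
  have hC : 0 < C := lt_of_lt_of_le hc hcC
  have hk1 : 1 ≤ C / c := (one_le_div hc).mpr hcC
  -- uniqueness of solutions
  have uniq : ∀ W W' : Y, W ∈ Yh → W' ∈ Yh → (∀ x ∈ Xh, B W x = B W' x) → W = W' := by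
    intro W W' hW hW' hWW
    have hmem : W - W' ∈ Yh := Yh.sub_mem hW hW'
    have hz : ∀ x ∈ Xh, B (W - W') x = B (0 : Y) x := by
      intro x hx
      simp [hWW x hx]
    have := key (W - W') hmem 0 hz
    rw [norm_zero, mul_zero] at this
    have : ‖W - W'‖ ≤ 0 := by nlinarith
    have : W - W' = 0 := norm_le_zero_iff.mp this
    exact sub_eq_zero.mp this
  -- existence via finite-dimensional duality
  set T : Yh →ₗ[ℝ] Module.Dual ℝ Xh := (B.domRestrict Yh).compl₂ Xh.subtype with hT
  have hTapp : ∀ (y : Yh) (x : Xh), T y x = B (y : Y) (x : X) := fun y x => rfl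
  have hTinj : Function.Injective T := by
    rw [← LinearMap.ker_eq_bot, LinearMap.ker_eq_bot']
    intro m hm
    have hmz : ∀ x ∈ Xh, B (m : Y) x = B (0 : Y) x := by
      intro x hx
      have := congrFun (congrArg DFunLike.coe hm) ⟨x, hx⟩
      simpa [hTapp] using this
    have := key (m : Y) m.2 0 hmz
    rw [norm_zero, mul_zero] at this
    have hle : ‖(m : Y)‖ ≤ 0 := by nlinarith
    have : (m : Y) = 0 := norm_le_zero_iff.mp hle
    exact Subtype.ext this
  have hdim' : Module.finrank ℝ Yh = Module.finrank ℝ (Module.Dual ℝ Xh) := by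
    rw [Subspace.dual_finrank_eq]; exact hdim
  have hTsurj : Function.Surjective T :=
    (LinearMap.injective_iff_surjective_of_finrank_eq_finrank hdim').mp hTinj
  obtain ⟨Uh, hUh⟩ := hTsurj ((B u).comp Xh.subtype)
  refine ⟨(Uh : Y), Uh.2, ?_, ?_, ?_⟩
  · intro x hx
    have := congrFun (congrArg DFunLike.coe hUh) ⟨x, hx⟩
    simpa [hTapp] using this
  · intro U' hU' hU'eq
    apply uniq U' (Uh : Y) hU' Uh.2
    intro x hx
    have h2 : B (Uh : Y) x = B u x := by
      have := congrFun (congrArg DFunLike.coe hUh) ⟨x, hx⟩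
      simpa [hTapp] using this
    rw [hU'eq x hx, h2]
  · -- quasi-optimality
    have hUeq : ∀ x ∈ Xh, B (Uh : Y) x = B u x := by
      intro x hx
      have := congrFun (congrArg DFunLike.coe hUh) ⟨x, hx⟩
      simpa [hTapp] using this
    have bound : ∀ y : Yh, ‖u - (Uh : Y)‖ ≤ (C / c) * ‖u - (y : Y)‖ := by
      intro y
      have hgeom := aux_geom_pg (u - (y : Y)) ((Uh : Y) - (y : Y)) (C / c) hk1 ?_
      · have : (u - (y : Y)) - ((Uh : Y) - (y : Y)) = u - (Uh : Y) := by abel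
        rwa [this] at hgeom
      · intro s
        set w : Y := (Uh : Y) - (y : Y) with hwdef
        set z : Y := (u - (y : Y)) - s • ((u - (y : Y)) - w) with hzdef
        have hwm : w ∈ Yh := Yh.sub_mem Uh.2 y.2
        have hwz : ∀ x ∈ Xh, B w x = B z x := by
          intro x hx
          simp only [hwdef, hzdef, map_sub, map_smul, LinearMap.sub_apply,
            LinearMap.smul_apply, smul_eq_mul]
          rw [hUeq x hx]
          ring
        have := key w hwm z hwz
        rw [div_mul_eq_mul_div, le_div_iff₀ hc, mul_comm]
        exact this
    have hinf : (c / C) * ‖u - (Uh : Y)‖ ≤ ⨅ y : Yh, ‖u - (y : Y)‖ := by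
      apply le_ciInf
      intro y
      have := bound y
      have h2 : (c / C) * ‖u - (Uh : Y)‖ ≤ (c / C) * ((C / c) * ‖u - (y : Y)‖) :=
        mul_le_mul_of_nonneg_left this (by positivity)
      calc (c / C) * ‖u - (Uh : Y)‖ ≤ (c / C) * ((C / c) * ‖u - (y : Y)‖) := h2
        _ = ‖u - (y : Y)‖ := by field_simp
    calc ‖u - (Uh : Y)‖ = (C / c) * ((c / C) * ‖u - (Uh : Y)‖) := by field_simp
      _ ≤ (C / c) * ⨅ y : Yh, ‖u - (y : Y)‖ :=
        mul_le_mul_of_nonneg_left hinf (by positivity)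
end

section
/- Let V be a real Hilbert space with norm ‖·‖_V, let b : V × V → ℝ be a continuous symmetric bilinear form with b(v,v) ≥ 0 for all v, let V_h ⊆ V be a linear subspace, and let T > 0. Let a : [0,T] → (V × V → ℝ) be a family of bilinear forms such that t ↦ a(t)(u,v) is continuous for all u,v ∈ V and, for constants 0 < m ≤ M, a(t)(v,v) ≥ m‖v‖_V² and |a(t)(u,v)| ≤ M‖u‖_V‖v‖_V for all t ∈ [0,T] and u,v ∈ V. Let e : [0,T] → V be continuously differentiable with values in V_h and e(0) = 0, let g : [0,T] → V be continuous, and assume that for every t ∈ [0,T] and every x ∈ V_h one has b(e′(t), x) + a(t)(e(t), x) = a(t)(g(t), x). Then (∫₀ᵀ ‖e(t)‖_V² dt)^{1/2} ≤ (M/m) (∫₀ᵀ ‖g(t)‖_V² dt)^{1/2}. -/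
open MeasureTheory intervalIntegral Set Filter

/-- **Energy estimate for the semidiscrete error equation.**
Let `b` be a continuous symmetric positive-semidefinite bilinear form on a real Hilbert
space `V`, let `V_h ⊆ V` be a subspace, and let `a(t)` be a family of bilinear forms,
continuous in `t`, coercive with constant `m` and bounded with constant `M` on `[0,T]`.
If `e` is continuously differentiable with values in `V_h`, `e(0) = 0`, `g` is continuous,
and `b(e′(t), x) + a(t)(e(t), x) = a(t)(g(t), x)` for all `t ∈ [0,T]`, `x ∈ V_h`, then
`(∫₀ᵀ ‖e‖²)^{1/2} ≤ (M/m) (∫₀ᵀ ‖g‖²)^{1/2}`. -/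
theorem semidiscrete_energy_estimate
    {V : Type*} [NormedAddCommGroup V] [InnerProductSpace ℝ V] [CompleteSpace V]
    (b : V →L[ℝ] V →L[ℝ] ℝ) (hb_symm : ∀ u v : V, b u v = b v u)
    (hb_nonneg : ∀ v : V, 0 ≤ b v v)
    (Vh : Submodule ℝ V) (T : ℝ) (hT : 0 < T)
    (a : ℝ → V →ₗ[ℝ] V →ₗ[ℝ] ℝ)
    (ha_cont : ∀ u v : V, ContinuousOn (fun t => a t u v) (Set.Icc 0 T))
    (m M : ℝ) (hm : 0 < m) (hmM : m ≤ M)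
    (ha_coer : ∀ t ∈ Set.Icc (0 : ℝ) T, ∀ v : V, m * ‖v‖ ^ 2 ≤ a t v v)
    (ha_bdd : ∀ t ∈ Set.Icc (0 : ℝ) T, ∀ u v : V, |a t u v| ≤ M * ‖u‖ * ‖v‖)
    (e e' g : ℝ → V)
    (he_deriv : ∀ t, HasDerivAt e (e' t) t) (he'_cont : Continuous e')
    (he_mem : ∀ t, e t ∈ Vh) (he0 : e 0 = 0) (hg_cont : Continuous g)
    (heq : ∀ t ∈ Set.Icc (0 : ℝ) T, ∀ x ∈ Vh,
      b (e' t) x + a t (e t) x = a t (g t) x) :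
    Real.sqrt (∫ t in (0 : ℝ)..T, ‖e t‖ ^ 2) ≤
      (M / m) * Real.sqrt (∫ t in (0 : ℝ)..T, ‖g t‖ ^ 2) := by
  have hTle : (0:ℝ) ≤ T := hT.le
  have huIcc : Set.uIcc (0:ℝ) T = Set.Icc 0 T := Set.uIcc_of_le hTle
  have he_cont : Continuous e :=
    continuous_iff_continuousAt.2 fun t => (he_deriv t).continuousAt
  -- joint continuity of t ↦ a t (f t) (h t)
  have ha_joint : ∀ f h : ℝ → V, Continuous f → Continuous h →
      ContinuousOn (fun t => a t (f t) (h t)) (Set.Icc 0 T) := by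
    intro f h hf hh t₀ ht₀
    rw [ContinuousWithinAt, ← tendsto_sub_nhds_zero_iff]
    have hbound : ∀ t ∈ Set.Icc (0:ℝ) T,
        |a t (f t) (h t) - a t₀ (f t₀) (h t₀)| ≤
          M * ‖f t - f t₀‖ * ‖h t‖ + M * ‖f t₀‖ * ‖h t - h t₀‖ +
            |a t (f t₀) (h t₀) - a t₀ (f t₀) (h t₀)| := by
      intro t ht
      have hdecomp : a t (f t) (h t) - a t₀ (f t₀) (h t₀) =
          a t (f t - f t₀) (h t) + a t (f t₀) (h t - h t₀) +
            (a t (f t₀) (h t₀) - a t₀ (f t₀) (h t₀)) := by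
        simp only [map_sub, LinearMap.sub_apply]
        ring
      rw [hdecomp]
      calc |a t (f t - f t₀) (h t) + a t (f t₀) (h t - h t₀) +
            (a t (f t₀) (h t₀) - a t₀ (f t₀) (h t₀))|
          ≤ |a t (f t - f t₀) (h t)| + |a t (f t₀) (h t - h t₀)| +
            |a t (f t₀) (h t₀) - a t₀ (f t₀) (h t₀)| := by
            exact (abs_add_le _ _).trans (by gcongr; exact abs_add_le _ _)
        _ ≤ M * ‖f t - f t₀‖ * ‖h t‖ + M * ‖f t₀‖ * ‖h t - h t₀‖ +
            |a t (f t₀) (h t₀) - a t₀ (f t₀) (h t₀)| := by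
            gcongr <;> exact ha_bdd t ht _ _
    have h1 : Tendsto (fun t => M * ‖f t - f t₀‖ * ‖h t‖) (nhdsWithin t₀ (Set.Icc 0 T))
        (nhds (M * ‖f t₀ - f t₀‖ * ‖h t₀‖)) := by
      apply Tendsto.mul
      · exact (tendsto_const_nhds.mul (((hf.tendsto t₀).sub tendsto_const_nhds).norm)).mono_left
          nhdsWithin_le_nhds
      · exact ((hh.tendsto t₀).norm).mono_left nhdsWithin_le_nhds
    have h2 : Tendsto (fun t => M * ‖f t₀‖ * ‖h t - h t₀‖) (nhdsWithin t₀ (Set.Icc 0 T))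
        (nhds (M * ‖f t₀‖ * ‖h t₀ - h t₀‖)) := by
      exact (tendsto_const_nhds.mul (((hh.tendsto t₀).sub tendsto_const_nhds).norm)).mono_left
        nhdsWithin_le_nhds
    have h3 : Tendsto (fun t => |a t (f t₀) (h t₀) - a t₀ (f t₀) (h t₀)|)
        (nhdsWithin t₀ (Set.Icc 0 T)) (nhds |a t₀ (f t₀) (h t₀) - a t₀ (f t₀) (h t₀)|) :=
      ((ha_cont (f t₀) (h t₀) t₀ ht₀).sub tendsto_const_nhds).abs
    have hsum := (h1.add h2).add h3
    simp only [sub_self, norm_zero, abs_zero, mul_zero, zero_mul, add_zero, zero_add] at hsum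
    have habs : Tendsto (fun t => |a t (f t) (h t) - a t₀ (f t₀) (h t₀)|)
        (nhdsWithin t₀ (Set.Icc 0 T)) (nhds 0) := by
      apply squeeze_zero' ?_ ?_ hsum
      · exact Filter.Eventually.of_forall fun t => abs_nonneg _
      · exact eventually_nhdsWithin_of_forall hbound
    exact (tendsto_zero_iff_abs_tendsto_zero _).2 habs
  -- continuity facts
  have hee : ContinuousOn (fun t => a t (e t) (e t)) (Set.Icc 0 T) := ha_joint e e he_cont he_cont
  have hge : ContinuousOn (fun t => a t (g t) (e t)) (Set.Icc 0 T) := ha_joint g e hg_cont he_cont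
  have hee_int : IntervalIntegrable (fun t => a t (e t) (e t)) volume 0 T :=
    (hee.mono huIcc.subset).intervalIntegrable
  have hge_int : IntervalIntegrable (fun t => a t (g t) (e t)) volume 0 T :=
    (hge.mono huIcc.subset).intervalIntegrable
  have he2_int : IntervalIntegrable (fun t => ‖e t‖ ^ 2) volume 0 T :=
    ((he_cont.norm.pow 2)).intervalIntegrable 0 T
  have hg2_int : IntervalIntegrable (fun t => ‖g t‖ ^ 2) volume 0 T :=
    ((hg_cont.norm.pow 2)).intervalIntegrable 0 T
  -- derivative of t ↦ b (e t) (e t)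
  have hF : ∀ t, HasDerivAt (fun t => b (e t) (e t)) (b (e' t) (e t) + b (e t) (e' t)) t := by
    intro t
    have h1 : HasDerivAt (fun t => b (e t)) (b (e' t)) t :=
      (b.hasFDerivAt (x := e t)).comp_hasDerivAt t (he_deriv t)
    exact h1.clm_apply (he_deriv t)
  have hderiv_cont : Continuous (fun t => b (e' t) (e t) + b (e t) (e' t)) := by
    have hb2 : Continuous fun p : V × V => b p.1 p.2 := b.continuous₂
    exact (hb2.comp (he'_cont.prodMk he_cont)).add (hb2.comp (he_cont.prodMk he'_cont))
  have hftc : ∫ t in (0:ℝ)..T, (b (e' t) (e t) + b (e t) (e' t)) =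
      b (e T) (e T) - b (e 0) (e 0) :=
    intervalIntegral.integral_eq_sub_of_hasDerivAt (fun t _ => hF t)
      (hderiv_cont.intervalIntegrable 0 T)
  have hb00 : b (e 0) (e 0) = 0 := by simp [he0]
  -- rewrite the integrand using the equation and symmetry
  have hinteg_eq : ∫ t in (0:ℝ)..T, (b (e' t) (e t) + b (e t) (e' t)) =
      ∫ t in (0:ℝ)..T, (2 * (a t (g t) (e t) - a t (e t) (e t))) := by
    apply intervalIntegral.integral_congr
    intro t ht
    rw [huIcc] at ht
    have h := heq t ht (e t) (he_mem t)
    have hsym : b (e t) (e' t) = b (e' t) (e t) := hb_symm _ _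
    dsimp only
    linarith
  have hbT : 0 ≤ b (e T) (e T) := hb_nonneg _
  have hkey : ∫ t in (0:ℝ)..T, a t (e t) (e t) ≤ ∫ t in (0:ℝ)..T, a t (g t) (e t) := by
    have h2 : ∫ t in (0:ℝ)..T, (2 * (a t (g t) (e t) - a t (e t) (e t))) =
        2 * ((∫ t in (0:ℝ)..T, a t (g t) (e t)) - ∫ t in (0:ℝ)..T, a t (e t) (e t)) := by
      rw [intervalIntegral.integral_const_mul, intervalIntegral.integral_sub hge_int hee_int]
    have := hinteg_eq.symm.trans hftc
    rw [h2, hb00, sub_zero] at this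
    linarith
  -- lower bound
  have hlow : m * ∫ t in (0:ℝ)..T, ‖e t‖ ^ 2 ≤ ∫ t in (0:ℝ)..T, a t (e t) (e t) := by
    rw [← intervalIntegral.integral_const_mul]
    apply intervalIntegral.integral_mono_on hTle (he2_int.const_mul m) hee_int
    intro t ht
    exact ha_coer t ht (e t)
  -- upper bound via Cauchy-Schwarz
  set A := ∫ t in (0:ℝ)..T, ‖e t‖ ^ 2 with hA
  set B := ∫ t in (0:ℝ)..T, ‖g t‖ ^ 2 with hB
  have hA0 : 0 ≤ A := intervalIntegral.integral_nonneg hTle fun t _ => by positivity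
  have hB0 : 0 ≤ B := intervalIntegral.integral_nonneg hTle fun t _ => by positivity
  haveI : IsFiniteMeasure (volume.restrict (Set.Ioc (0:ℝ) T)) :=
    ⟨by rw [Measure.restrict_apply_univ]; exact measure_Ioc_lt_top⟩
  have memL2 : ∀ f : ℝ → V, Continuous f →
      MemLp (fun t => ‖f t‖) (ENNReal.ofReal 2) (volume.restrict (Set.Ioc 0 T)) := by
    intro f hf
    obtain ⟨C, hC⟩ := (isCompact_Icc (a := (0:ℝ)) (b := T)).exists_bound_of_continuousOn
      hf.norm.continuousOn
    refine MemLp.of_bound hf.norm.aestronglyMeasurable C ?_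
    filter_upwards [ae_restrict_mem measurableSet_Ioc] with t ht
    exact hC t (Set.Ioc_subset_Icc_self ht)
  have hCS : ∫ t in (0:ℝ)..T, ‖g t‖ * ‖e t‖ ≤ Real.sqrt B * Real.sqrt A := by
    rw [intervalIntegral.integral_of_le hTle]
    have hpq : Real.HolderConjugate 2 2 := Real.HolderConjugate.two_two
    have h := MeasureTheory.integral_mul_le_Lp_mul_Lq_of_nonneg hpq
      (f := fun t => ‖g t‖) (g := fun t => ‖e t‖)
      (Filter.Eventually.of_forall fun t => norm_nonneg _)
      (Filter.Eventually.of_forall fun t => norm_nonneg _)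
      (memL2 g hg_cont) (memL2 e he_cont)
    have hBeq : (∫ t in Set.Ioc (0:ℝ) T, ‖g t‖ ^ (2:ℝ)) = B := by
      rw [hB, intervalIntegral.integral_of_le hTle]
      apply MeasureTheory.integral_congr_ae
      filter_upwards with t
      rw [show ((2:ℝ)) = ((2:ℕ):ℝ) by norm_num, Real.rpow_natCast]
    have hAeq : (∫ t in Set.Ioc (0:ℝ) T, ‖e t‖ ^ (2:ℝ)) = A := by
      rw [hA, intervalIntegral.integral_of_le hTle]
      apply MeasureTheory.integral_congr_ae
      filter_upwards with t
      rw [show ((2:ℝ)) = ((2:ℕ):ℝ) by norm_num, Real.rpow_natCast]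
    rw [hBeq, hAeq] at h
    calc ∫ t in Set.Ioc (0:ℝ) T, ‖g t‖ * ‖e t‖ ≤ B ^ ((1:ℝ)/2) * A ^ ((1:ℝ)/2) := h
      _ = Real.sqrt B * Real.sqrt A := by
          rw [Real.sqrt_eq_rpow, Real.sqrt_eq_rpow]
  have hup : ∫ t in (0:ℝ)..T, a t (g t) (e t) ≤ M * (Real.sqrt B * Real.sqrt A) := by
    have h1 : ∫ t in (0:ℝ)..T, a t (g t) (e t) ≤ ∫ t in (0:ℝ)..T, M * (‖g t‖ * ‖e t‖) := by
      apply intervalIntegral.integral_mono_on hTle hge_int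
      · exact (continuous_const.mul (hg_cont.norm.mul he_cont.norm)).intervalIntegrable 0 T
      · intro t ht
        have := ha_bdd t ht (g t) (e t)
        calc a t (g t) (e t) ≤ |a t (g t) (e t)| := le_abs_self _
          _ ≤ M * ‖g t‖ * ‖e t‖ := this
          _ = M * (‖g t‖ * ‖e t‖) := by ring
    rw [intervalIntegral.integral_const_mul] at h1
    exact h1.trans (by
      have := hCS
      have hM0 : (0:ℝ) ≤ M := le_trans hm.le hmM
      nlinarith [hCS])
  -- combine
  have hmain : m * A ≤ M * (Real.sqrt B * Real.sqrt A) := le_trans hlow (hkey.trans hup)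
  have hsqA : Real.sqrt A * Real.sqrt A = A := Real.mul_self_sqrt hA0
  rcases eq_or_lt_of_le (Real.sqrt_nonneg A) with h0 | hpos
  · rw [← h0]
    have hM0 : (0:ℝ) < M := lt_of_lt_of_le hm hmM
    positivity
  · rw [← hsqA] at hmain
    have h2 : m * Real.sqrt A ≤ M * Real.sqrt B := by
      nlinarith [hmain, hpos, Real.sqrt_nonneg B]
    rw [div_mul_eq_mul_div, le_div_iff₀ hm]
    linarith
end
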